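/- Let v : [0,1] → ℝ be continuous with v(0) = 0, concave on [0,1], and suppose v is a viscosity supersolution of r·v(x) − r·x − (1/(2rc))·(max(M,0))² ≥ 0 on (0,1) in the sense that for every x₀ ∈ (0,1) and every C² function φ with a local minimum of v − φ at x₀, r·v(x₀) − r·x₀ − (1/(2rc))·(max(φ''(x₀),0))² ≥ 0. If there exists x' ∈ (0,1] with v(x') > 0, then a contradiction arises; and if v ≡ 0 a contradiction also arises (using the test point x = 1/2 with test function having second derivative −1). Hence no such v exists, i.e., any supersolution satisfies v(0) > 0. -/

import Mathlib

open Set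
open Filter Topology

lemma quadCD (a b c : ℝ) : ContDiff ℝ 2 (fun x : ℝ => a*x^2 + b*x + c) := by
  fun_prop

lemma deriv_quad (a b c : ℝ) : deriv (fun x : ℝ => a*x^2 + b*x + c) = fun x => 2*a*x + b := by
  funext x
  have h : HasDerivAt (fun x : ℝ => a*x^2 + b*x + c) (2*a*x + b) x := by
    have h := (((hasDerivAt_pow 2 x).const_mul a).add ((hasDerivAt_id x).const_mul b)).add_const c
    refine h.congr_deriv ?_
    norm_num
    ring
  exact h.deriv

lemma deriv2_quad (a b c : ℝ) : deriv (deriv (fun x : ℝ => a*x^2 + b*x + c)) = fun _ => 2*a := by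
  rw [deriv_quad]
  funext x
  have h : HasDerivAt (fun x : ℝ => 2*a*x + b) (2*a) x := by
    simpa using ((hasDerivAt_id x).const_mul (2*a)).add_const b
  exact h.deriv

lemma exists_K (a b s t : ℝ) (hs : 0 < s) (ht : 0 < t) :
    ∃ K : ℝ, 0 < K ∧ a < K * s ∧ b < K * t := by
  refine ⟨max ((a+1)/s) (max ((b+1)/t) 1), ?_, ?_, ?_⟩
  · exact lt_of_lt_of_le one_pos (le_trans (le_max_right _ _) (le_max_right _ _))
  · have h1 : (a+1)/s ≤ max ((a+1)/s) (max ((b+1)/t) 1) := le_max_left _ _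
    have h2 := (div_le_iff₀ hs).mp h1
    nlinarith
  · have h1 : (b+1)/t ≤ max ((a+1)/s) (max ((b+1)/t) 1) :=
      le_trans (le_max_left _ _) (le_max_right _ _)
    have h2 := (div_le_iff₀ ht).mp h1
    nlinarith

theorem stmt11 (v : ℝ → ℝ) (r c : ℝ)
    (hr : 0 < r) (hc : 0 < c)
    (hcont : ContinuousOn v (Icc 0 1))
    (hconc : ConcaveOn ℝ (Icc 0 1) v)
    (hint : ∀ x₀ ∈ Ioo (0:ℝ) 1, ∀ φ : ℝ → ℝ, ContDiff ℝ 2 φ → φ x₀ = v x₀ →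
      (∀ x ∈ Icc (0:ℝ) 1, φ x ≤ v x) →
      0 ≤ r * v x₀ - r * x₀ - (1/(2*r*c)) * (max (deriv (deriv φ) x₀) 0)^2)
    (hbdy : ∀ φ : ℝ → ℝ, ContDiff ℝ 2 φ → φ 0 = v 0 →
      (∀ x ∈ Icc (0:ℝ) 1, φ x ≤ v x) →
      0 ≤ max (r * v 0 - (1/(2*r*c)) * (max (deriv (deriv φ) 0) 0)^2)
        (-(deriv φ 0))) :
    0 < v 0 := by
  by_contra h
  push_neg at h
  -- h : v 0 ≤ 0
  by_cases hcase : ∃ y ∈ Ioo (0:ℝ) 1, v y < y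
  · -- Case 1: some interior point with v y < y; build interior test function.
    obtain ⟨y, hy, hvy⟩ := hcase
    have hy0 : 0 < y := hy.1
    have hy1 : y < 1 := hy.2
    obtain ⟨D, hDdef⟩ : ∃ D : ℝ, D = y - v y := ⟨_, rfl⟩
    have hD : 0 < D := by rw [hDdef]; linarith
    have h1y : (0:ℝ) < (1 - y)^2 := pow_pos (by linarith) 2
    have hyy : (0:ℝ) < y^2 := pow_pos hy0 2
    obtain ⟨K, hK, hK1, hK0⟩ := exists_K (1 - v 1 - D) (-(v 0) - D) ((1-y)^2) (y^2) h1y hyy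
    -- minimize G x = v x - x + K*(x-y)^2 over [0,1]
    have hGc : ContinuousOn (fun x => v x - x + K*(x-y)^2) (Icc 0 1) := by
      apply ContinuousOn.add
      · exact hcont.sub continuousOn_id
      · fun_prop
    obtain ⟨x₀, hx₀m, hminOn⟩ :=
      isCompact_Icc.exists_isMinOn (nonempty_Icc.mpr zero_le_one) hGc
    have hmin : ∀ x ∈ Icc (0:ℝ) 1, v x₀ - x₀ + K*(x₀-y)^2 ≤ v x - x + K*(x-y)^2 :=
      fun x hx => hminOn hx
    have hymem : y ∈ Icc (0:ℝ) 1 := ⟨le_of_lt hy0, le_of_lt hy1⟩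
    have hGy : v x₀ - x₀ + K*(x₀-y)^2 ≤ -D := by
      have := hmin y hymem
      simp at this
      linarith [this]
    have hx₀0 : x₀ ≠ 0 := by
      intro h0
      rw [h0] at hGy
      have : v 0 - 0 + K*(0-y)^2 = v 0 + K*y^2 := by ring
      rw [this] at hGy
      linarith
    have hx₀1 : x₀ ≠ 1 := by
      intro h1
      rw [h1] at hGy
      have : v 1 - 1 + K*(1-y)^2 ≤ -D := by linarith [hGy]
      linarith
    have hx₀ : x₀ ∈ Ioo (0:ℝ) 1 :=
      ⟨lt_of_le_of_ne hx₀m.1 (Ne.symm hx₀0), lt_of_le_of_ne hx₀m.2 hx₀1⟩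
    -- test function
    obtain ⟨a, ha⟩ : ∃ a : ℝ, a = -K := ⟨_, rfl⟩
    obtain ⟨b, hb⟩ : ∃ b : ℝ, b = 1 + 2*K*y := ⟨_, rfl⟩
    obtain ⟨cc, hcc⟩ : ∃ cc : ℝ, cc = v x₀ - x₀ + K*(x₀-y)^2 - K*y^2 := ⟨_, rfl⟩
    have hφeq : ∀ x : ℝ, a*x^2 + b*x + cc = x - K*(x-y)^2 + (v x₀ - x₀ + K*(x₀-y)^2) := by
      intro x; rw [ha, hb, hcc]; ring
    have htouch : (fun x : ℝ => a*x^2 + b*x + cc) x₀ = v x₀ := by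
      simp only
      rw [hφeq x₀]; ring
    have hbelow : ∀ x ∈ Icc (0:ℝ) 1, (fun x : ℝ => a*x^2 + b*x + cc) x ≤ v x := by
      intro x hx
      simp only
      rw [hφeq x]
      have := hmin x hx
      linarith
    have key := hint x₀ hx₀ _ (quadCD a b cc) htouch hbelow
    rw [deriv2_quad] at key
    have hmax : max (2*a) 0 = 0 := max_eq_right (by rw [ha]; linarith)
    rw [hmax] at key
    norm_num at key
    -- key : 0 ≤ r * v x₀ - r * x₀  (or similar); so v x₀ ≥ x₀
    have hge : x₀ ≤ v x₀ := by nlinarith [key]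
    have hlt : v x₀ < x₀ := by nlinarith [hGy, sq_nonneg (x₀ - y), hK.le, hD]
    linarith
  · -- Case 2: v x ≥ x on the interior
    push_neg at hcase
    -- boundary limits
    have hcl0 : (0:ℝ) ∈ closure (Ioo (0:ℝ) 1) := by
      rw [closure_Ioo (by norm_num : (0:ℝ) ≠ 1)]
      exact ⟨le_refl 0, by norm_num⟩
    have hcl1 : (1:ℝ) ∈ closure (Ioo (0:ℝ) 1) := by
      rw [closure_Ioo (by norm_num : (0:ℝ) ≠ 1)]
      exact ⟨by norm_num, le_refl 1⟩
    have hne0 : (𝓝[Ioo (0:ℝ) 1] 0).NeBot := mem_closure_iff_nhdsWithin_neBot.mp hcl0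
    have hne1 : (𝓝[Ioo (0:ℝ) 1] 1).NeBot := mem_closure_iff_nhdsWithin_neBot.mp hcl1
    have hv0tend : Tendsto v (𝓝[Ioo (0:ℝ) 1] 0) (𝓝 (v 0)) :=
      (hcont 0 ⟨le_refl 0, zero_le_one⟩).mono Ioo_subset_Icc_self
    have hv1tend : Tendsto v (𝓝[Ioo (0:ℝ) 1] 1) (𝓝 (v 1)) :=
      (hcont 1 ⟨zero_le_one, le_refl 1⟩).mono Ioo_subset_Icc_self
    have hv0ge : (0:ℝ) ≤ v 0 := by
      refine le_of_tendsto_of_tendsto tendsto_const_nhds hv0tend ?_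
      filter_upwards [self_mem_nhdsWithin] with x hx
      exact le_trans hx.1.le (hcase x hx)
    have hv1ge : (1:ℝ) ≤ v 1 := by
      refine le_of_tendsto_of_tendsto (tendsto_id.mono_left nhdsWithin_le_nhds) hv1tend ?_
      filter_upwards [self_mem_nhdsWithin] with x hx
      exact hcase x hx
    have hv0 : v 0 = 0 := le_antisymm h hv0ge
    -- chord bound: v x ≥ x * v 1
    have hch : ∀ x ∈ Icc (0:ℝ) 1, x * v 1 ≤ v x := by
      intro x hx
      have h0m : (0:ℝ) ∈ Icc (0:ℝ) 1 := ⟨le_refl 0, zero_le_one⟩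
      have h1m : (1:ℝ) ∈ Icc (0:ℝ) 1 := ⟨zero_le_one, le_refl 1⟩
      have := hconc.2 h0m h1m (by linarith [hx.2] : (0:ℝ) ≤ 1 - x) hx.1 (by ring)
      simp only [smul_eq_mul, mul_zero, mul_one, zero_add] at this
      rw [hv0] at this
      linarith
    -- convex boundary test function
    obtain ⟨s, hsdef⟩ : ∃ s : ℝ, s = v 1 := ⟨_, rfl⟩
    have hs : (1:ℝ) ≤ s := hsdef ▸ hv1ge
    have htouch : (fun x : ℝ => (s/2)*x^2 + (s/2)*x + 0) 0 = v 0 := by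
      simp [hv0]
    have hbelow : ∀ x ∈ Icc (0:ℝ) 1, (fun x : ℝ => (s/2)*x^2 + (s/2)*x + 0) x ≤ v x := by
      intro x hx
      have hchx := hch x hx
      rw [← hsdef] at hchx
      have hx2 : x^2 ≤ x := by nlinarith [hx.1, hx.2]
      simp only
      nlinarith [hx.1]
    have key := hbdy _ (quadCD (s/2) (s/2) 0) htouch hbelow
    rw [deriv2_quad, deriv_quad] at key
    have hmax : max (2*(s/2)) 0 = s := by
      rw [max_eq_left (by linarith)]; ring
    rw [hmax] at key
    simp only [mul_zero, zero_mul, zero_add] at key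
    -- key : 0 ≤ max (r * v 0 - 1/(2rc) * s^2) (-(s/2))
    have hrc : 0 < 1/(2*r*c) := by positivity
    have hbad : max (r * v 0 - 1/(2*r*c) * s^2) (-(s/2)) < 0 := by
      apply max_lt
      · rw [hv0]
        have hpos : 0 < 1/(2*r*c) * s^2 := mul_pos hrc (pow_pos (by linarith) 2)
        linarith
      · linarith
    linarith
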